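/- Let μ be a probability measure on [0,∞) whose tail function G(x) := μ((x,∞)) is strictly positive for all x > 0 and regularly varying at infinity with exponent −ξ, where ξ > 0. Then for every real p with 0 ≤ p < ξ, the integral ∫_{(x,∞)} u^p μ(du) is finite for every x > 0 sufficiently large, and lim_{x→∞} (log ∫_{(x,∞)} u^p μ(du)) / (log x) = p − ξ. -/
import Mathlib


open Filter MeasureTheory

lemma pow_swap (a : ℝ) (k : ℕ) : ((2:ℝ)^a)^k = ((2:ℝ)^(k:ℝ))^a := by
  rw [← Real.rpow_natCast ((2:ℝ)^a) k, ← Real.rpow_mul (by norm_num), mul_comm,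
    Real.rpow_mul (by norm_num), Real.rpow_natCast]

lemma div_rpow_neg (t b c : ℝ) (ht : 0 ≤ t) (hb : 0 < b) :
    (t/b)^c = t^c * b^(-c) := by
  rw [Real.rpow_neg hb.le, Real.div_rpow ht hb.le, div_eq_mul_inv]

lemma tail_power_bounds (μ : Measure ℝ) [IsProbabilityMeasure μ]
    (ξ ε : ℝ) (hξ : 0 < ξ) (hε : 0 < ε) (hεξ : ε < ξ)
    (hpos : ∀ x : ℝ, 0 < x → 0 < (μ (Set.Ioi x)).toReal)
    (hRV : Tendsto (fun t => (μ (Set.Ioi (t * 2))).toReal / (μ (Set.Ioi t)).toReal)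
      atTop (nhds ((2:ℝ) ^ (-ξ)))) :
    ∃ C c t₀ : ℝ, 0 < C ∧ 0 < c ∧ 1 ≤ t₀ ∧ ∀ t, t₀ ≤ t →
      c * t ^ (-ξ - ε) ≤ (μ (Set.Ioi t)).toReal ∧
      (μ (Set.Ioi t)).toReal ≤ C * t ^ (-ξ + ε) := by
  set G : ℝ → ℝ := fun t => (μ (Set.Ioi t)).toReal with hG
  have hG_anti : Antitone G := fun a b hab =>
    ENNReal.toReal_mono (measure_ne_top μ _) (measure_mono (Set.Ioi_subset_Ioi hab))
  have h1 : (2:ℝ)^(-ξ-ε) < 2^(-ξ) :=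
    Real.rpow_lt_rpow_left_iff one_lt_two |>.mpr (by linarith)
  have h2 : (2:ℝ)^(-ξ) < 2^(-ξ+ε) :=
    Real.rpow_lt_rpow_left_iff one_lt_two |>.mpr (by linarith)
  obtain ⟨t₁, ht₁⟩ := eventually_atTop.mp ((hRV.eventually_const_lt h1).and
    (hRV.eventually_lt_const h2))
  set t₀ := max t₁ 1 with ht₀def
  have ht₀1 : (1:ℝ) ≤ t₀ := le_max_right _ _
  have ht₀pos : (0:ℝ) < t₀ := lt_of_lt_of_le one_pos ht₀1
  have hGpos : ∀ t, t₀ ≤ t → 0 < G t := fun t ht => hpos t (lt_of_lt_of_le ht₀pos ht)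
  have ratio : ∀ t, t₀ ≤ t →
      (2:ℝ)^(-ξ-ε) * G t ≤ G (t*2) ∧ G (t*2) ≤ (2:ℝ)^(-ξ+ε) * G t := by
    intro t ht
    have hGt := hGpos t ht
    have h := ht₁ t (le_trans (le_max_left _ _) ht)
    exact ⟨(le_div_iff₀ hGt).mp h.1.le, (div_le_iff₀ hGt).mp h.2.le⟩
  have ind : ∀ k : ℕ, G t₀ * ((2:ℝ)^(-ξ-ε))^k ≤ G (t₀ * 2^k) ∧
      G (t₀ * 2^k) ≤ G t₀ * ((2:ℝ)^(-ξ+ε))^k := by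
    intro k; induction k with
    | zero => simp
    | succ k ih =>
      have hb1 : (0:ℝ) < (2:ℝ)^(-ξ-ε) := Real.rpow_pos_of_pos two_pos _
      have hb2 : (0:ℝ) < (2:ℝ)^(-ξ+ε) := Real.rpow_pos_of_pos two_pos _
      have ht : t₀ ≤ t₀ * 2^k := le_mul_of_one_le_right ht₀pos.le (one_le_pow₀ one_le_two)
      have hr := ratio (t₀*2^k) ht
      have heq : t₀ * 2^(k+1) = (t₀*2^k)*2 := by ring
      rw [heq]
      constructor
      · calc G t₀ * ((2:ℝ)^(-ξ-ε))^(k+1)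
            = (2:ℝ)^(-ξ-ε) * (G t₀ * ((2:ℝ)^(-ξ-ε))^k) := by ring
          _ ≤ (2:ℝ)^(-ξ-ε) * G (t₀*2^k) := mul_le_mul_of_nonneg_left ih.1 hb1.le
          _ ≤ G ((t₀*2^k)*2) := hr.1
      · calc G ((t₀*2^k)*2) ≤ (2:ℝ)^(-ξ+ε) * G (t₀*2^k) := hr.2
          _ ≤ (2:ℝ)^(-ξ+ε) * (G t₀ * ((2:ℝ)^(-ξ+ε))^k) :=
              mul_le_mul_of_nonneg_left ih.2 hb2.le
          _ = G t₀ * ((2:ℝ)^(-ξ+ε))^(k+1) := by ring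
  have hGt₀pos : 0 < G t₀ := hGpos t₀ le_rfl
  refine ⟨G t₀ * (2*t₀)^(ξ-ε), G t₀ * (t₀/2)^(ξ+ε), t₀,
    mul_pos hGt₀pos (Real.rpow_pos_of_pos (by positivity) _),
    mul_pos hGt₀pos (Real.rpow_pos_of_pos (by positivity) _), ht₀1, ?_⟩
  intro t ht
  have ht0 : (0:ℝ) < t := lt_of_lt_of_le ht₀pos ht
  set k := ⌊Real.logb 2 (t/t₀)⌋₊ with hkdef
  have hq : 1 ≤ t/t₀ := (one_le_div ht₀pos).mpr ht
  have hlb : 0 ≤ Real.logb 2 (t/t₀) := Real.logb_nonneg one_lt_two hq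
  have hk1 : (2:ℝ)^(k:ℝ) ≤ t/t₀ := by
    calc (2:ℝ)^(k:ℝ) ≤ 2^(Real.logb 2 (t/t₀)) :=
          Real.rpow_le_rpow_of_exponent_le one_le_two (Nat.floor_le hlb)
      _ = t/t₀ := Real.rpow_logb two_pos (by norm_num) (by positivity)
  have hk2 : t/t₀ < (2:ℝ)^((k:ℝ)+1) := by
    calc t/t₀ = 2^(Real.logb 2 (t/t₀)) :=
          (Real.rpow_logb two_pos (by norm_num) (by positivity)).symm
      _ < 2^((k:ℝ)+1) :=
          Real.rpow_lt_rpow_of_exponent_lt one_lt_two (Nat.lt_floor_add_one _)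
  have hrk : (2:ℝ)^(k:ℝ) = (2:ℝ)^k := Real.rpow_natCast 2 k
  have hrk1 : (2:ℝ)^((k:ℝ)+1) = (2:ℝ)^(k+1) := by
    rw [show ((k:ℝ)+1) = ((k+1:ℕ):ℝ) by push_cast; ring, Real.rpow_natCast]
  have hle1 : t₀ * 2^k ≤ t := by
    rw [mul_comm]
    have := (le_div_iff₀ ht₀pos).mp hk1
    rwa [hrk] at this
  have hle2 : t < t₀ * 2^(k+1) := by
    have := (div_lt_iff₀ ht₀pos).mp hk2
    rwa [hrk1, mul_comm] at this
  constructor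
  · -- lower bound
    have hlow : G t₀ * ((2:ℝ)^(-ξ-ε))^(k+1) ≤ G t :=
      le_trans (ind (k+1)).1 (hG_anti hle2.le)
    have h2k1 : (2:ℝ)^(((k+1:ℕ)):ℝ) ≤ 2*t/t₀ := by
      push_cast
      rw [Real.rpow_add two_pos, Real.rpow_one]
      calc (2:ℝ)^(k:ℝ) * 2 ≤ (t/t₀) * 2 := mul_le_mul_of_nonneg_right hk1 (by norm_num)
        _ = 2*t/t₀ := by ring
    have hx : (2*t/t₀)^(-ξ-ε) ≤ ((2:ℝ)^((k+1:ℕ):ℝ))^(-ξ-ε) :=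
      Real.rpow_le_rpow_of_nonpos (by positivity) h2k1 (by linarith)
    have hdiv : (2*t/t₀)^(-ξ-ε) = t^(-ξ-ε) * (t₀/2)^(ξ+ε) := by
      rw [show 2*t/t₀ = t/(t₀/2) by ring, div_rpow_neg t (t₀/2) _ ht0.le (by positivity)]
      ring_nf
    calc G t₀ * (t₀/2)^(ξ+ε) * t^(-ξ-ε)
        = G t₀ * ((2*t/t₀)^(-ξ-ε)) := by rw [hdiv]; ring
      _ ≤ G t₀ * (((2:ℝ)^((k+1:ℕ):ℝ))^(-ξ-ε)) := mul_le_mul_of_nonneg_left hx hGt₀pos.le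
      _ = G t₀ * ((2:ℝ)^(-ξ-ε))^(k+1) := by rw [← pow_swap]
      _ ≤ G t := hlow
  · -- upper bound
    have hup : G t ≤ G t₀ * ((2:ℝ)^(-ξ+ε))^k := le_trans (hG_anti hle1) (ind k).2
    have h2k : t/(2*t₀) ≤ (2:ℝ)^(k:ℝ) := by
      rw [hrk]
      have : t < (2*t₀) * 2^k := by rw [show (2*t₀)*2^k = t₀ * 2^(k+1) by ring]; exact hle2
      exact (div_le_iff₀ (by positivity)).mpr (by linarith [this])
    have hx : ((2:ℝ)^(k:ℝ))^(-ξ+ε) ≤ (t/(2*t₀))^(-ξ+ε) :=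
      Real.rpow_le_rpow_of_nonpos (by positivity) h2k (by linarith)
    have hdiv : (t/(2*t₀))^(-ξ+ε) = t^(-ξ+ε) * (2*t₀)^(ξ-ε) := by
      rw [div_rpow_neg t (2*t₀) (-ξ+ε) ht0.le (by positivity)]
      ring_nf
    calc G t ≤ G t₀ * ((2:ℝ)^(-ξ+ε))^k := hup
      _ = G t₀ * ((2:ℝ)^(k:ℝ))^(-ξ+ε) := by rw [pow_swap]
      _ ≤ G t₀ * ((t/(2*t₀))^(-ξ+ε)) := mul_le_mul_of_nonneg_left hx hGt₀pos.le
      _ = G t₀ * (2*t₀)^(ξ-ε) * t^(-ξ+ε) := by rw [hdiv]; ring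

lemma dyadic_cover (x : ℝ) (hx : 0 < x) :
    Set.Ioi x ⊆ ⋃ k : ℕ, Set.Ioc (x*2^k) (x*2^(k+1)) := by
  intro u hu
  have hu' : x < u := hu
  have hux : 1 < u/x := (one_lt_div hx).mpr hu'
  have hupos : 0 < u := lt_trans hx hu'
  have hlb : 0 < Real.logb 2 (u/x) := Real.logb_pos one_lt_two hux
  set m := ⌈Real.logb 2 (u/x)⌉₊ with hm
  have hm1 : 1 ≤ m := Nat.one_le_iff_ne_zero.mpr (by
    simp only [hm, ne_eq, Nat.ceil_eq_zero, not_le]; exact hlb)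
  set k := m - 1 with hk
  have hkm : k + 1 = m := Nat.succ_pred_eq_of_pos hm1
  simp only [Set.mem_iUnion]
  refine ⟨k, ?_, ?_⟩
  · -- x * 2^k < u
    have h1 : (k:ℝ) < Real.logb 2 (u/x) := by
      have := Nat.ceil_lt_add_one hlb.le
      have hcast : (k:ℝ) = (m:ℝ) - 1 := by
        rw [← hkm]; push_cast; ring
      rw [hcast]; linarith
    have h2 : (2:ℝ)^(k:ℝ) < u/x := by
      calc (2:ℝ)^(k:ℝ) < 2^(Real.logb 2 (u/x)) :=
            Real.rpow_lt_rpow_of_exponent_lt one_lt_two h1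
        _ = u/x := Real.rpow_logb two_pos (by norm_num) (by positivity)
    rw [← Real.rpow_natCast (2:ℝ) k]
    calc x * 2^(k:ℝ) < x * (u/x) := by
          exact mul_lt_mul_of_pos_left h2 hx
      _ = u := by field_simp
  · -- u ≤ x * 2^(k+1)
    have h1 : Real.logb 2 (u/x) ≤ ((k:ℝ)+1) := by
      have : Real.logb 2 (u/x) ≤ (m:ℝ) := Nat.le_ceil _
      have hcast : ((k:ℝ)+1) = (m:ℝ) := by rw [← hkm]; push_cast; ring
      rw [hcast]; exact this
    have h2 : u/x ≤ (2:ℝ)^((k:ℝ)+1) := by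
      calc u/x = 2^(Real.logb 2 (u/x)) :=
            (Real.rpow_logb two_pos (by norm_num) (by positivity)).symm
        _ ≤ 2^((k:ℝ)+1) := Real.rpow_le_rpow_of_exponent_le one_le_two h1
    have hcast : (2:ℝ)^((k:ℝ)+1) = (2:ℝ)^(k+1) := by
      rw [show ((k:ℝ)+1) = ((k+1:ℕ):ℝ) by push_cast; ring, Real.rpow_natCast]
    rw [hcast] at h2
    calc u = x * (u/x) := by field_simp
      _ ≤ x * 2^(k+1) := mul_le_mul_of_nonneg_left h2 hx.le

lemma term_calc (x C p ξ ε : ℝ) (hx : 0 < x) (hC : 0 ≤ C) (k : ℕ) :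
    (x*2^(k+1))^p * (C * (x*2^k)^(-ξ+ε)) =
      ((2:ℝ)^p * C * x^(p-ξ+ε)) * ((2:ℝ)^(p-ξ+ε))^k := by
  have A : (x*2^(k+1))^p = x^p * ((2:ℝ)^p)^(k+1) := by
    rw [Real.mul_rpow hx.le (by positivity), ← Real.rpow_natCast (2:ℝ) (k+1), ← pow_swap]
  have B : (x*2^k)^(-ξ+ε) = x^(-ξ+ε) * ((2:ℝ)^(-ξ+ε))^k := by
    rw [Real.mul_rpow hx.le (by positivity), ← Real.rpow_natCast (2:ℝ) k, ← pow_swap]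
  have Cx : x^(p-ξ+ε) = x^p * x^(-ξ+ε) := by
    rw [← Real.rpow_add hx]; congr 1; ring
  have D : (2:ℝ)^(p-ξ+ε) = (2:ℝ)^p * (2:ℝ)^(-ξ+ε) := by
    rw [← Real.rpow_add two_pos]; congr 1; ring
  rw [A, B, Cx, D, mul_pow, pow_succ]
  ring

lemma moment_upper (μ : Measure ℝ) [IsProbabilityMeasure μ]
    (p ξ ε C t₀ : ℝ) (hp : 0 ≤ p) (hC : 0 < C) (hε : 0 < ε) (hεξp : ε < ξ - p)
    (ht₀ : 1 ≤ t₀)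
    (hub : ∀ t, t₀ ≤ t → (μ (Set.Ioi t)).toReal ≤ C * t ^ (-ξ + ε)) :
    ∃ K : ℝ, 0 < K ∧ ∀ x, t₀ ≤ x →
      ∫⁻ u in Set.Ioi x, ENNReal.ofReal (u ^ p) ∂μ ≤ ENNReal.ofReal (K * x^(p-ξ+ε)) := by
  set r := (2:ℝ)^(p-ξ+ε) with hrdef
  have hr0 : 0 < r := Real.rpow_pos_of_pos two_pos _
  have hr1 : r < 1 := Real.rpow_lt_one_of_one_lt_of_neg one_lt_two (by linarith)
  refine ⟨(2:ℝ)^p * C * (1-r)⁻¹,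
    mul_pos (mul_pos (Real.rpow_pos_of_pos two_pos _) hC) (inv_pos.mpr (by linarith)), ?_⟩
  intro x hx
  have hx0 : (0:ℝ) < x := lt_of_lt_of_le one_pos (le_trans ht₀ hx)
  calc ∫⁻ u in Set.Ioi x, ENNReal.ofReal (u ^ p) ∂μ
      ≤ ∫⁻ u in ⋃ k : ℕ, Set.Ioc (x*2^k) (x*2^(k+1)), ENNReal.ofReal (u ^ p) ∂μ :=
        lintegral_mono_set (dyadic_cover x hx0)
    _ ≤ ∑' k : ℕ, ∫⁻ u in Set.Ioc (x*2^k) (x*2^(k+1)), ENNReal.ofReal (u ^ p) ∂μ :=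
        lintegral_iUnion_le _ _
    _ ≤ ∑' k : ℕ, ENNReal.ofReal (((2:ℝ)^p * C * x^(p-ξ+ε)) * r^k) := by
        refine ENNReal.tsum_le_tsum fun k => ?_
        have hxk : (0:ℝ) < x * 2^k := by positivity
        have h1 : ∫⁻ u in Set.Ioc (x*2^k) (x*2^(k+1)), ENNReal.ofReal (u ^ p) ∂μ
            ≤ ENNReal.ofReal ((x*2^(k+1))^p) * μ (Set.Ioc (x*2^k) (x*2^(k+1))) := by
          rw [← setLIntegral_const]
          refine setLIntegral_mono measurable_const fun u hu => ?_
          exact ENNReal.ofReal_le_ofReal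
            (Real.rpow_le_rpow (le_of_lt (lt_trans hxk hu.1)) hu.2 hp)
        have h2 : μ (Set.Ioc (x*2^k) (x*2^(k+1))) ≤ ENNReal.ofReal (C * (x*2^k)^(-ξ+ε)) := by
          refine le_trans (measure_mono Set.Ioc_subset_Ioi_self) ?_
          have hb := hub (x*2^k) (le_trans hx (le_mul_of_one_le_right hx0.le
            (one_le_pow₀ one_le_two)))
          calc μ (Set.Ioi (x*2^k)) = ENNReal.ofReal ((μ (Set.Ioi (x*2^k))).toReal) :=
                (ENNReal.ofReal_toReal (measure_ne_top μ _)).symm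
            _ ≤ ENNReal.ofReal (C * (x*2^k)^(-ξ+ε)) := ENNReal.ofReal_le_ofReal hb
        calc ∫⁻ u in Set.Ioc (x*2^k) (x*2^(k+1)), ENNReal.ofReal (u ^ p) ∂μ
            ≤ ENNReal.ofReal ((x*2^(k+1))^p) * μ (Set.Ioc (x*2^k) (x*2^(k+1))) := h1
          _ ≤ ENNReal.ofReal ((x*2^(k+1))^p) * ENNReal.ofReal (C * (x*2^k)^(-ξ+ε)) :=
              mul_le_mul_right h2 _
          _ = ENNReal.ofReal ((x*2^(k+1))^p * (C * (x*2^k)^(-ξ+ε))) :=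
              (ENNReal.ofReal_mul (by positivity)).symm
          _ = ENNReal.ofReal (((2:ℝ)^p * C * x^(p-ξ+ε)) * r^k) := by
              rw [term_calc x C p ξ ε hx0 hC.le k]
    _ = ENNReal.ofReal ((2:ℝ)^p * C * x^(p-ξ+ε)) * ∑' k : ℕ, (ENNReal.ofReal r)^k := by
        rw [← ENNReal.tsum_mul_left]
        congr 1 with k
        rw [ENNReal.ofReal_mul (by positivity), ENNReal.ofReal_pow hr0.le]
    _ = ENNReal.ofReal ((2:ℝ)^p * C * (1-r)⁻¹ * x^(p-ξ+ε)) := by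
        rw [ENNReal.tsum_geometric,
          show (1 : ENNReal) - ENNReal.ofReal r = ENNReal.ofReal (1-r) by
            rw [ENNReal.ofReal_sub 1 hr0.le, ENNReal.ofReal_one],
          ← ENNReal.ofReal_inv_of_pos (by linarith),
          ← ENNReal.ofReal_mul (by positivity)]
        congr 1
        ring


/-- Relation (3.31) (main24): tail moments of a distribution with regularly
varying tail of index `-ξ`, for `0 ≤ p < ξ`. -/
theorem stmt_17 (μ : Measure ℝ) [IsProbabilityMeasure μ] (hsupp : μ (Set.Iio 0) = 0)
    (ξ : ℝ) (hξ : 0 < ξ)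
    (hpos : ∀ x : ℝ, 0 < x → 0 < (μ (Set.Ioi x)).toReal)
    (hRV : ∀ x : ℝ, 0 < x →
      Tendsto (fun t => (μ (Set.Ioi (t * x))).toReal / (μ (Set.Ioi t)).toReal)
        atTop (nhds (x ^ (-ξ)))) :
    ∀ p : ℝ, 0 ≤ p → p < ξ →
      (∃ x₀ : ℝ, 0 < x₀ ∧ ∀ x, x₀ ≤ x →
        ∫⁻ u in Set.Ioi x, ENNReal.ofReal (u ^ p) ∂μ < ⊤) ∧
      Tendsto
        (fun x => Real.log (∫⁻ u in Set.Ioi x, ENNReal.ofReal (u ^ p) ∂μ).toReal /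
          Real.log x)
        atTop (nhds (p - ξ)) := by
  intro p hp hpξ
  have hRV2 := hRV 2 two_pos
  set M : ℝ → ENNReal := fun x => ∫⁻ u in Set.Ioi x, ENNReal.ofReal (u ^ p) ∂μ with hMdef
  have hlowM : ∀ x : ℝ, 0 < x → ENNReal.ofReal (x^p) * μ (Set.Ioi x) ≤ M x := by
    intro x hx
    rw [← setLIntegral_const]
    refine setLIntegral_mono
      ((Real.continuous_rpow_const hp).measurable.ennreal_ofReal) fun u hu => ?_
    exact ENNReal.ofReal_le_ofReal (Real.rpow_le_rpow hx.le (le_of_lt hu) hp)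
  constructor
  · -- finiteness
    have hε : (0:ℝ) < (ξ-p)/2 := by linarith
    obtain ⟨C, c, t₀, hC, hc, ht₀, hbounds⟩ :=
      tail_power_bounds μ ξ ((ξ-p)/2) hξ hε (by linarith) hpos hRV2
    obtain ⟨K, hK, hKb⟩ := moment_upper μ p ξ ((ξ-p)/2) C t₀ hp hC hε (by linarith) ht₀
      (fun t ht => (hbounds t ht).2)
    exact ⟨t₀, lt_of_lt_of_le one_pos ht₀,
      fun x hxx => lt_of_le_of_lt (hKb x hxx) ENNReal.ofReal_lt_top⟩
  · -- limit
    rw [Metric.tendsto_nhds]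
    intro δ hδ
    set ε := min (δ/3) ((ξ-p)/2) with hεdef
    have hε : 0 < ε := lt_min (by linarith) (by linarith)
    have hε3 : ε ≤ δ/3 := min_le_left _ _
    have hεξp : ε < ξ - p := lt_of_le_of_lt (min_le_right _ _) (by linarith)
    have hεξ : ε < ξ := by linarith
    obtain ⟨C, c, t₀, hC, hc, ht₀, hbounds⟩ :=
      tail_power_bounds μ ξ ε hξ hε hεξ hpos hRV2
    obtain ⟨K, hK, hKb⟩ := moment_upper μ p ξ ε C t₀ hp hC hε hεξp ht₀
      (fun t ht => (hbounds t ht).2)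
    have hK3 : ∀ᶠ x in atTop, |Real.log K / Real.log x| < δ/3 := by
      have := Metric.tendsto_nhds.mp
        (tendsto_const_nhds.div_atTop Real.tendsto_log_atTop :
          Tendsto (fun x => Real.log K / Real.log x) atTop (nhds 0)) (δ/3) (by linarith)
      simpa only [Real.dist_eq, sub_zero] using this
    have hc3 : ∀ᶠ x in atTop, |Real.log c / Real.log x| < δ/3 := by
      have := Metric.tendsto_nhds.mp
        (tendsto_const_nhds.div_atTop Real.tendsto_log_atTop :
          Tendsto (fun x => Real.log c / Real.log x) atTop (nhds 0)) (δ/3) (by linarith)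
      simpa only [Real.dist_eq, sub_zero] using this
    filter_upwards [eventually_ge_atTop t₀, eventually_gt_atTop 1, hK3, hc3]
      with x hxt₀ hx1 hxK hxc
    have hx0 : (0:ℝ) < x := lt_trans one_pos hx1
    have hlogx : 0 < Real.log x := Real.log_pos hx1
    have hMle := hKb x hxt₀
    have hMfin : M x ≠ ⊤ := ne_top_of_le_ne_top ENNReal.ofReal_ne_top hMle
    have hTub : (M x).toReal ≤ K * x^(p-ξ+ε) :=
      ENNReal.toReal_le_of_le_ofReal (by positivity) hMle
    have hTlb' : x^p * (μ (Set.Ioi x)).toReal ≤ (M x).toReal := by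
      have h := ENNReal.toReal_mono hMfin (hlowM x hx0)
      rwa [ENNReal.toReal_mul, ENNReal.toReal_ofReal (by positivity)] at h
    have hGlb := (hbounds x hxt₀).1
    have hTlb : c * x^(p-ξ-ε) ≤ (M x).toReal := by
      have h2 : c * x^(p-ξ-ε) = x^p * (c * x^(-ξ-ε)) := by
        rw [show p-ξ-ε = p + (-ξ-ε) by ring, Real.rpow_add hx0]; ring
      rw [h2]
      exact le_trans (mul_le_mul_of_nonneg_left hGlb (by positivity)) hTlb'
    have hTpos : 0 < (M x).toReal := lt_of_lt_of_le (by positivity) hTlb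
    have hlogub : Real.log (M x).toReal ≤ Real.log K + (p-ξ+ε) * Real.log x := by
      calc Real.log (M x).toReal ≤ Real.log (K * x^(p-ξ+ε)) := Real.log_le_log hTpos hTub
        _ = Real.log K + (p-ξ+ε) * Real.log x := by
            rw [Real.log_mul (ne_of_gt hK) (ne_of_gt (Real.rpow_pos_of_pos hx0 _)),
              Real.log_rpow hx0]
    have hloglb : Real.log c + (p-ξ-ε) * Real.log x ≤ Real.log (M x).toReal := by
      calc Real.log c + (p-ξ-ε) * Real.log x = Real.log (c * x^(p-ξ-ε)) := by
            rw [Real.log_mul (ne_of_gt hc) (ne_of_gt (Real.rpow_pos_of_pos hx0 _)),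
              Real.log_rpow hx0]
        _ ≤ Real.log (M x).toReal := Real.log_le_log (by positivity) hTlb
    have hub2 : Real.log (M x).toReal / Real.log x ≤ Real.log K / Real.log x + (p-ξ+ε) := by
      have := (div_le_div_iff_of_pos_right hlogx).mpr hlogub
      rwa [add_div, mul_div_cancel_right₀ _ (ne_of_gt hlogx)] at this
    have hlb2 : Real.log c / Real.log x + (p-ξ-ε) ≤ Real.log (M x).toReal / Real.log x := by
      have := (div_le_div_iff_of_pos_right hlogx).mpr hloglb
      rwa [add_div, mul_div_cancel_right₀ _ (ne_of_gt hlogx)] at this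
    rw [Real.dist_eq, abs_lt]
    obtain ⟨hK1, hK2⟩ := abs_lt.mp hxK
    obtain ⟨hc1, hc2⟩ := abs_lt.mp hxc
    constructor <;> [linarith; linarith]
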